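/- Let H1, H2, H3 be Hilbert spaces and A : H1 → H3, B : H2 → H3 bounded linear operators such that the range of A is not contained in the range of B and B* is injective. Then there exists a sequence (g_m) in H3 such that ‖A* g_m‖ → ∞ and ‖B* g_m‖ → 0 as m → ∞. -/

import Mathlib

open ContinuousLinearMap InnerProductSpace

lemma douglas_key {H1 H2 H3 : Type*}
    [NormedAddCommGroup H1] [InnerProductSpace ℝ H1] [CompleteSpace H1]
    [NormedAddCommGroup H2] [InnerProductSpace ℝ H2] [CompleteSpace H2]
    [NormedAddCommGroup H3] [InnerProductSpace ℝ H3] [CompleteSpace H3]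
    (A : H1 →L[ℝ] H3) (B : H2 →L[ℝ] H3)
    (hinj : Function.Injective (ContinuousLinearMap.adjoint B))
    (c : ℝ)
    (h : ∀ g : H3, ‖ContinuousLinearMap.adjoint A g‖ ≤ c * ‖ContinuousLinearMap.adjoint B g‖) :
    Set.range A ⊆ Set.range B := by
  rintro _ ⟨x, rfl⟩
  set Bs := (ContinuousLinearMap.adjoint B) with hBs
  have hinj' : Function.Injective (Bs.toLinearMap) := hinj
  let e : H3 ≃ₗ[ℝ] LinearMap.range Bs.toLinearMap := LinearEquiv.ofInjective _ hinj'
  let φ₀ : H3 →ₗ[ℝ] ℝ := (innerSL ℝ (A x)).toLinearMap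
  let φL : LinearMap.range Bs.toLinearMap →ₗ[ℝ] ℝ := φ₀ ∘ₗ (e.symm : _ →ₗ[ℝ] H3)
  have key : ∀ z : LinearMap.range Bs.toLinearMap, φL z = inner ℝ (A x) (e.symm z) := fun z => rfl
  have hsymm : ∀ (g : H3) (hy : Bs.toLinearMap g ∈ LinearMap.range Bs.toLinearMap),
      e.symm ⟨Bs.toLinearMap g, hy⟩ = g := by
    intro g hy
    apply hinj'
    have := congrArg Subtype.val (e.apply_symm_apply ⟨Bs.toLinearMap g, hy⟩)
    simp only [e, LinearEquiv.ofInjective_apply] at this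
    exact this
  have hbound : ∀ y : LinearMap.range Bs.toLinearMap, ‖φL y‖ ≤ (c * ‖x‖) * ‖(y : H2)‖ := by
    rintro ⟨y, hy⟩
    obtain ⟨g, rfl⟩ := LinearMap.mem_range.mp hy
    rw [key, hsymm g]
    have h1 : (inner ℝ (A x) g : ℝ) = inner ℝ x (ContinuousLinearMap.adjoint A g) := by
      rw [ContinuousLinearMap.adjoint_inner_right]
    rw [h1]
    calc ‖(inner ℝ x (ContinuousLinearMap.adjoint A g) : ℝ)‖
        ≤ ‖x‖ * ‖ContinuousLinearMap.adjoint A g‖ := norm_inner_le_norm _ _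
      _ ≤ ‖x‖ * (c * ‖Bs g‖) := mul_le_mul_of_nonneg_left (h g) (norm_nonneg x)
      _ = (c * ‖x‖) * ‖Bs g‖ := by ring
  let φ : LinearMap.range Bs.toLinearMap →L[ℝ] ℝ := φL.mkContinuous _ hbound
  obtain ⟨ψ, hψ, -⟩ := exists_extension_norm_eq (LinearMap.range Bs.toLinearMap) φ
  set hvec : H2 := (InnerProductSpace.toDual ℝ H2).symm ψ with hh
  refine ⟨hvec, ?_⟩
  apply ext_inner_right ℝ
  intro g
  have h1 : (inner ℝ (B hvec) g : ℝ) = inner ℝ hvec (Bs g) := by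
    rw [hBs, ContinuousLinearMap.adjoint_inner_right]
  have h2 : (inner ℝ hvec (Bs g) : ℝ) = ψ (Bs g) := by
    rw [hh]; exact InnerProductSpace.toDual_symm_apply
  have h3 : ψ (Bs g) = φ ⟨Bs g, ⟨g, rfl⟩⟩ := hψ ⟨Bs g, ⟨g, rfl⟩⟩
  have h4 : φ ⟨Bs g, ⟨g, rfl⟩⟩ = inner ℝ (A x) g := by
    have : φ ⟨Bs g, ⟨g, rfl⟩⟩ = φL ⟨Bs g, ⟨g, rfl⟩⟩ := rfl
    rw [this, key]
    exact congrArg (fun y => (inner ℝ (A x) y : ℝ)) (hsymm g ⟨g, rfl⟩)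
  rw [h1, h2, h3, h4]

/-- If `range A ⊄ range B` and `B*` is injective, then there is a sequence `g_m`
with `‖A* g_m‖ → ∞` and `‖B* g_m‖ → 0`. -/
theorem stmt_3 {H1 H2 H3 : Type*}
    [NormedAddCommGroup H1] [InnerProductSpace ℝ H1] [CompleteSpace H1]
    [NormedAddCommGroup H2] [InnerProductSpace ℝ H2] [CompleteSpace H2]
    [NormedAddCommGroup H3] [InnerProductSpace ℝ H3] [CompleteSpace H3]
    (A : H1 →L[ℝ] H3) (B : H2 →L[ℝ] H3)
    (hnot : ¬ Set.range A ⊆ Set.range B)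
    (hinj : Function.Injective (ContinuousLinearMap.adjoint B)) :
    ∃ g : ℕ → H3,
      Filter.Tendsto (fun m => ‖ContinuousLinearMap.adjoint A (g m)‖) Filter.atTop Filter.atTop ∧
      Filter.Tendsto (fun m => ‖ContinuousLinearMap.adjoint B (g m)‖) Filter.atTop (nhds 0) := by
  set As := ContinuousLinearMap.adjoint A
  set Bs := ContinuousLinearMap.adjoint B
  have hex : ∀ m : ℕ, ∃ g' : H3, ((m : ℝ) + 1)^2 * ‖Bs g'‖ < ‖As g'‖ := by
    intro m
    by_contra hcon
    push_neg at hcon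
    exact hnot (douglas_key A B hinj (((m : ℝ) + 1)^2) hcon)
  choose g' hg' using hex
  have hBpos : ∀ m : ℕ, 0 < ‖Bs (g' m)‖ := by
    intro m
    rw [norm_pos_iff]
    intro h0
    have hz : g' m = 0 := hinj (by simpa using h0)
    have h2 := hg' m
    rw [hz] at h2
    simp at h2
  set g : ℕ → H3 := fun m => (((m : ℝ) + 1) * ‖Bs (g' m)‖)⁻¹ • g' m with hg
  have hm1pos : ∀ m : ℕ, (0:ℝ) < (m : ℝ) + 1 := fun m => by positivity
  have hBnorm : ∀ m : ℕ, ‖Bs (g m)‖ = ((m : ℝ) + 1)⁻¹ := by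
    intro m
    simp only [hg, map_smul, norm_smul, norm_inv, Real.norm_eq_abs]
    rw [abs_of_pos (mul_pos (hm1pos m) (hBpos m)), mul_inv]
    field_simp [(hBpos m).ne']
  have hAnorm : ∀ m : ℕ, (m : ℝ) + 1 ≤ ‖As (g m)‖ := by
    intro m
    simp only [hg, map_smul, norm_smul, norm_inv, Real.norm_eq_abs]
    rw [abs_of_pos (mul_pos (hm1pos m) (hBpos m))]
    rw [inv_mul_eq_div, le_div_iff₀ (mul_pos (hm1pos m) (hBpos m))]
    nlinarith [hg' m, hBpos m]
  refine ⟨g, ?_, ?_⟩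
  · apply Filter.tendsto_atTop_mono hAnorm
    exact Filter.tendsto_atTop_add_const_right _ 1 tendsto_natCast_atTop_atTop
  · have : (fun m : ℕ => ‖Bs (g m)‖) = (fun m : ℕ => 1 / ((m : ℝ) + 1)) := by
      funext m; rw [hBnorm m, one_div]
    rw [this]
    exact tendsto_one_div_add_atTop_nhds_zero_nat
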